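/- There exists a constant C > 0 such that the following holds. Let n ≥ 1 be an integer, let 0 ≤ a₁ < b₁ < a₂ < b₂ < ⋯ < a_n < b_n ≤ 1, set A := ⋃_{i=1}^n (a_i, b_i), and let η ∈ (0,1]. Then there exists a function u : ℝ → ℝ that is Lipschitz with Lipschitz constant at most 1/η and satisfies: 0 ≤ u ≤ 1 everywhere; u(x) = 1 for every x ∈ A; u(x) = 0 whenever dist(x, A) ≥ η; ∫₀¹ (u′(x))² dx ≤ C·n/η; and ∫₀¹ (1 − 𝟙_A(x))·u(x)³ dx ≤ C·n·η (where u′ denotes the almost-everywhere defined derivative of the Lipschitz function u and 𝟙_A the indicator function of A). -/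

import Mathlib

open MeasureTheory intervalIntegral

/-- The test-function construction of Proposition 1 (Pr:1D): for
`A = ⋃ᵢ (aᵢ, bᵢ)` a finite union of `n` disjoint intervals in `[0,1]` and
`η ∈ (0,1]`, there is a `1/η`-Lipschitz profile `u` equal to `1` on `A`,
vanishing at distance `≥ η` from `A`, with `∫₀¹ (u')² ≤ Cn/η` and
`∫₀¹ (1-𝟙_A)u³ ≤ Cnη`. -/
theorem profile_construction_1D :
    ∃ C > (0:ℝ),
      ∀ (n : ℕ), 1 ≤ n →
      ∀ (a b : Fin n → ℝ),
        (∀ i, 0 ≤ a i) → (∀ i, a i < b i) → (∀ i, b i ≤ 1) →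
        (∀ i j, i < j → b i < a j) →
        ∀ (η : ℝ), 0 < η → η ≤ 1 →
          ∃ u : ℝ → ℝ,
            LipschitzWith (Real.toNNReal (1 / η)) u ∧
            (∀ x, 0 ≤ u x ∧ u x ≤ 1) ∧
            (∀ x ∈ ⋃ i, Set.Ioo (a i) (b i), u x = 1) ∧
            (∀ x : ℝ, η ≤ Metric.infDist x (⋃ i, Set.Ioo (a i) (b i)) → u x = 0) ∧
            (∫ x in (0:ℝ)..1, (deriv u x) ^ 2) ≤ C * n / η ∧
            (∫ x in (0:ℝ)..1,
                (1 - (⋃ i, Set.Ioo (a i) (b i)).indicator (fun _ => (1:ℝ)) x) * u x ^ 3)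
              ≤ C * n * η := by
  refine ⟨2, by norm_num, ?_⟩
  intro n hn a b ha hab hb hsep η hη hη1
  set A : Set ℝ := ⋃ i, Set.Ioo (a i) (b i) with hAdef
  set T : Set ℝ := ⋃ i, (Set.Icc (a i - η) (a i) ∪ Set.Icc (b i) (b i + η)) with hTdef
  set u : ℝ → ℝ := fun x => max (1 - Metric.infDist x A / η) 0 with hu
  have hAopen : IsOpen A := isOpen_iUnion fun i => isOpen_Ioo
  have i0 : Fin n := ⟨0, hn⟩
  have hAne : A.Nonempty :=
    ⟨(a i0 + b i0) / 2, Set.mem_iUnion.2 ⟨i0, by constructor <;> nlinarith [hab i0]⟩⟩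
  have hclos : closure A ⊆ ⋃ i, Set.Icc (a i) (b i) :=
    closure_minimal (Set.iUnion_mono fun i => Set.Ioo_subset_Icc_self)
      (isClosed_iUnion_of_finite fun i => isClosed_Icc)
  have hsub01 : (⋃ i, Set.Icc (a i) (b i)) ⊆ Set.Icc (0:ℝ) 1 :=
    Set.iUnion_subset fun i => Set.Icc_subset_Icc (ha i) (hb i)
  have hcompact : IsCompact (closure A) :=
    isCompact_Icc.of_isClosed_subset isClosed_closure (hclos.trans hsub01)
  have hd0 : ∀ x : ℝ, 0 ≤ Metric.infDist x A := fun x => Metric.infDist_nonneg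
  have humem : ∀ x ∈ A, u x = 1 := by
    intro x hx
    simp [hu, Metric.infDist_zero_of_mem hx]
  have hufar : ∀ x : ℝ, η ≤ Metric.infDist x A → u x = 0 := by
    intro x hx
    have h1 : 1 - Metric.infDist x A / η ≤ 0 := by
      rw [sub_nonpos, le_div_iff₀ hη]; linarith
    simp only [hu]
    exact max_eq_right h1
  have hurange : ∀ x : ℝ, 0 ≤ u x ∧ u x ≤ 1 := by
    intro x
    refine ⟨le_max_right _ _, ?_⟩
    have h2 : 0 ≤ Metric.infDist x A / η := div_nonneg (hd0 x) hη.le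
    exact max_le (by linarith) zero_le_one
  -- Lipschitz
  have hlip : LipschitzWith (Real.toNNReal (1 / η)) u := by
    have h1 : LipschitzWith 1 (fun x : ℝ => Metric.infDist x A) := Metric.lipschitz_infDist_pt A
    have h2 : LipschitzWith (Real.toNNReal (1 / η)) (fun t : ℝ => max (1 - t / η) 0) := by
      apply LipschitzWith.max_const
      apply LipschitzWith.of_dist_le_mul
      intro s t
      rw [Real.dist_eq, Real.dist_eq, Real.coe_toNNReal _ (by positivity)]
      have h3 : (1 - s / η) - (1 - t / η) = (t - s) / η := by ring
      rw [h3, abs_div, abs_of_pos hη, abs_sub_comm]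
      rw [div_eq_mul_inv, mul_comm, one_div]
    have h4 := h2.comp h1
    rw [mul_one] at h4
    exact h4
  -- pointwise derivative bound
  have hderiv_bound : ∀ x : ℝ, |deriv u x| ≤ 1 / η := by
    intro x
    have h5 := norm_deriv_le_of_lipschitz (𝕜 := ℝ) (x₀ := x) hlip
    rwa [Real.norm_eq_abs, Real.coe_toNNReal _ (by positivity)] at h5
  -- if x is not in A and close to A, it is in T
  have hTmem : ∀ x : ℝ, x ∉ A → Metric.infDist x A ≤ η → x ∈ T := by
    intro x hxA hxd
    obtain ⟨y, hy, hxy⟩ := hcompact.exists_infDist_eq_dist hAne.closure x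
    rw [Metric.infDist_closure] at hxy
    have hdist : dist x y ≤ η := by rw [← hxy]; exact hxd
    have hy2 := hclos hy
    rw [Set.mem_iUnion] at hy2
    obtain ⟨i, hyi⟩ := hy2
    rw [Set.mem_Icc] at hyi
    rw [Real.dist_eq] at hdist
    have h1 := abs_le.1 hdist
    rcases le_or_gt x (a i) with hxa | hxa
    · exact Set.mem_iUnion.2 ⟨i, Or.inl ⟨by linarith [hyi.1], hxa⟩⟩
    · rcases lt_or_ge x (b i) with hxb | hxb
      · exact absurd (show x ∈ A from Set.mem_iUnion.2 ⟨i, Set.mem_Ioo.2 ⟨hxa, hxb⟩⟩) hxA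
      · exact Set.mem_iUnion.2 ⟨i, Or.inr ⟨hxb, by linarith [hyi.2]⟩⟩
  have huzero : ∀ x : ℝ, x ∉ A → x ∉ T → u x = 0 := by
    intro x hxA hxT
    refine hufar x ?_
    by_contra h
    exact hxT (hTmem x hxA (le_of_not_ge h))
  have hderiv_zero : ∀ x : ℝ, x ∉ T → deriv u x = 0 := by
    intro x hxT
    by_cases hxA : x ∈ A
    · have he : u =ᶠ[nhds x] fun _ => (1:ℝ) := by
        filter_upwards [hAopen.mem_nhds hxA] with y hy using humem y hy
      rw [he.deriv_eq]; simp
    · have hgt : η < Metric.infDist x A := by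
        by_contra h
        exact hxT (hTmem x hxA (le_of_not_gt h))
      have hopen : IsOpen {z : ℝ | η < Metric.infDist z A} :=
        isOpen_lt continuous_const (Metric.continuous_infDist_pt A)
      have he : u =ᶠ[nhds x] fun _ => (0:ℝ) := by
        filter_upwards [hopen.mem_nhds hgt] with y hy using hufar y (le_of_lt hy)
      rw [he.deriv_eq]; simp
  -- measure of T
  have hTmeas : MeasurableSet T :=
    MeasurableSet.iUnion fun i => (measurableSet_Icc.union measurableSet_Icc)
  have hTvol : volume T ≤ ENNReal.ofReal (2 * n * η) := by
    calc volume T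
        ≤ ∑' i : Fin n, volume (Set.Icc (a i - η) (a i) ∪ Set.Icc (b i) (b i + η)) :=
          measure_iUnion_le _
      _ ≤ ∑' _i : Fin n, ENNReal.ofReal (2 * η) := by
          refine ENNReal.tsum_le_tsum fun i => ?_
          calc volume (Set.Icc (a i - η) (a i) ∪ Set.Icc (b i) (b i + η))
              ≤ volume (Set.Icc (a i - η) (a i)) + volume (Set.Icc (b i) (b i + η)) :=
                measure_union_le _ _
            _ = ENNReal.ofReal η + ENNReal.ofReal η := by
                rw [Real.volume_Icc, Real.volume_Icc]; ring_nf
            _ = ENNReal.ofReal (2 * η) := by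
                rw [← ENNReal.ofReal_add hη.le hη.le]; ring_nf
      _ = ENNReal.ofReal (2 * n * η) := by
          rw [tsum_fintype]
          rw [Finset.sum_const, Finset.card_univ, Fintype.card_fin, nsmul_eq_mul,
            ← ENNReal.ofReal_natCast n, ← ENNReal.ofReal_mul (by positivity)]
          ring_nf
  have hTfin : volume T < ⊤ := lt_of_le_of_lt hTvol ENNReal.ofReal_lt_top
  have hTreal : (volume T).toReal ≤ 2 * n * η :=
    ENNReal.toReal_le_of_le_ofReal (by positivity) hTvol
  -- the indicator integral
  have hindInt : Integrable (T.indicator fun _ => (1:ℝ)) :=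
    (integrable_indicator_iff hTmeas).2 (integrableOn_const hTfin.ne)
  have hind : (∫ x in (0:ℝ)..1, T.indicator (fun _ => (1:ℝ)) x) ≤ 2 * n * η := by
    rw [intervalIntegral.integral_of_le zero_le_one]
    calc (∫ x in Set.Ioc (0:ℝ) 1, T.indicator (fun _ => (1:ℝ)) x)
        ≤ ∫ x, T.indicator (fun _ => (1:ℝ)) x :=
          setIntegral_le_integral hindInt
            (Filter.Eventually.of_forall fun x =>
              Set.indicator_nonneg (fun _ _ => zero_le_one) x)
      _ = (volume T).toReal := by
          rw [integral_indicator_const (1:ℝ) hTmeas, smul_eq_mul, mul_one]; rfl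
      _ ≤ 2 * n * η := hTreal
  -- integrability facts
  have hmeas_deriv : Measurable (deriv u) := measurable_deriv u
  have hg1int : Integrable (fun x => (1/η)^2 * T.indicator (fun _ => (1:ℝ)) x) :=
    hindInt.const_mul _
  have hg1 : IntervalIntegrable (fun x => (1/η)^2 * T.indicator (fun _ => (1:ℝ)) x)
      volume 0 1 := hg1int.intervalIntegrable
  have hf1 : IntervalIntegrable (fun x => (deriv u x)^2) volume 0 1 := by
    rw [intervalIntegrable_iff]
    apply Integrable.mono' (g := fun _ => (1/η)^2)
      (integrableOn_const measure_Ioc_lt_top.ne)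
      ((hmeas_deriv.pow_const 2).aestronglyMeasurable.restrict)
    refine Filter.Eventually.of_forall fun x => ?_
    rw [Real.norm_eq_abs, abs_of_nonneg (by positivity), ← sq_abs]
    exact pow_le_pow_left₀ (abs_nonneg _) (hderiv_bound x) 2
  have hptw1 : ∀ x : ℝ, (deriv u x)^2 ≤ (1/η)^2 * T.indicator (fun _ => (1:ℝ)) x := by
    intro x
    by_cases hx : x ∈ T
    · rw [Set.indicator_of_mem hx, mul_one]
      calc (deriv u x)^2 = |deriv u x|^2 := (sq_abs _).symm
        _ ≤ (1/η)^2 := pow_le_pow_left₀ (abs_nonneg _) (hderiv_bound x) 2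
    · rw [Set.indicator_of_notMem hx, mul_zero, hderiv_zero x hx]
      norm_num
  have hI1 : (∫ x in (0:ℝ)..1, (deriv u x)^2) ≤ 2 * n / η := by
    calc (∫ x in (0:ℝ)..1, (deriv u x)^2)
        ≤ ∫ x in (0:ℝ)..1, (1/η)^2 * T.indicator (fun _ => (1:ℝ)) x :=
          intervalIntegral.integral_mono_on zero_le_one hf1 hg1 (fun x _ => hptw1 x)
      _ = (1/η)^2 * ∫ x in (0:ℝ)..1, T.indicator (fun _ => (1:ℝ)) x :=
          intervalIntegral.integral_const_mul _ _
      _ ≤ (1/η)^2 * (2 * n * η) := mul_le_mul_of_nonneg_left hind (by positivity)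
      _ = 2 * n / η := by field_simp
  -- the potential term
  have hucont : Continuous u := hlip.continuous
  have hptw2 : ∀ x : ℝ,
      (1 - A.indicator (fun _ => (1:ℝ)) x) * u x ^ 3 ≤ T.indicator (fun _ => (1:ℝ)) x := by
    intro x
    by_cases hxA : x ∈ A
    · rw [Set.indicator_of_mem hxA]
      simpa using Set.indicator_nonneg (fun _ _ => zero_le_one) x
    · rw [Set.indicator_of_notMem hxA, sub_zero, one_mul]
      by_cases hxT : x ∈ T
      · rw [Set.indicator_of_mem hxT]
        have h6 := hurange x
        calc u x ^ 3 ≤ 1 ^ 3 := pow_le_pow_left₀ h6.1 h6.2 3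
          _ = 1 := one_pow 3
      · rw [Set.indicator_of_notMem hxT, huzero x hxA hxT]
        norm_num
  have hptw2' : ∀ x : ℝ, 0 ≤ (1 - A.indicator (fun _ => (1:ℝ)) x) * u x ^ 3 := by
    intro x
    have h7 : A.indicator (fun _ => (1:ℝ)) x ≤ 1 :=
      Set.indicator_le_self' (fun _ _ => zero_le_one) x |>.trans (le_refl _) |>.trans
        (by by_cases hxA : x ∈ A <;> simp [hxA])
    have h8 : 0 ≤ u x := (hurange x).1
    have h9 : A.indicator (fun _ => (1:ℝ)) x ≤ 1 := by
      by_cases hxA : x ∈ A <;> simp [hxA]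
    exact mul_nonneg (by linarith) (by positivity)
  have hf2meas : Measurable (fun x => (1 - A.indicator (fun _ => (1:ℝ)) x) * u x ^ 3) := by
    exact ((measurable_const.sub
      ((measurable_const (a := (1:ℝ))).indicator hAopen.measurableSet)).mul
      ((hucont.measurable).pow_const 3))
  have hf2 : IntervalIntegrable (fun x => (1 - A.indicator (fun _ => (1:ℝ)) x) * u x ^ 3)
      volume 0 1 := by
    rw [intervalIntegrable_iff]
    apply Integrable.mono' (g := fun _ => (1:ℝ))
      (integrableOn_const measure_Ioc_lt_top.ne)
      (hf2meas.aestronglyMeasurable.restrict)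
    refine Filter.Eventually.of_forall fun x => ?_
    rw [Real.norm_eq_abs, abs_of_nonneg (hptw2' x)]
    by_cases hxA : x ∈ A
    · rw [Set.indicator_of_mem hxA]; simp
    · rw [Set.indicator_of_notMem hxA, sub_zero, one_mul]
      have h6 := hurange x
      calc u x ^ 3 ≤ 1 ^ 3 := pow_le_pow_left₀ h6.1 h6.2 3
        _ = 1 := one_pow 3
  have hindII : IntervalIntegrable (T.indicator fun _ => (1:ℝ)) volume 0 1 :=
    hindInt.intervalIntegrable
  have hI2 : (∫ x in (0:ℝ)..1, (1 - A.indicator (fun _ => (1:ℝ)) x) * u x ^ 3)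
      ≤ 2 * n * η := by
    calc (∫ x in (0:ℝ)..1, (1 - A.indicator (fun _ => (1:ℝ)) x) * u x ^ 3)
        ≤ ∫ x in (0:ℝ)..1, T.indicator (fun _ => (1:ℝ)) x :=
          intervalIntegral.integral_mono_on zero_le_one hf2 hindII (fun x _ => hptw2 x)
      _ ≤ 2 * n * η := hind
  exact ⟨u, hlip, hurange, humem, hufar, hI1, hI2⟩
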